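/- Let σ_1 = [[0,1],[1,0]] and σ_2 = [[0,−i],[i,0]] be the Pauli matrices, and for real k_1, k_2 define the 2×2 Hermitian matrices H_1 = −2π σ_1, H_2 = −2π(cos(k_1−k_2) σ_1 + sin(k_1−k_2) σ_2), H_3 = −2π(cos(k_1) σ_1 + sin(k_1) σ_2), H_4 = −2π(cos(k_2) σ_1 + sin(k_2) σ_2). Then for all k_1, k_2 ∈ ℝ the product of matrix exponentials exp(−(i/4)H_4) · exp(−(i/4)H_3) · exp(−(i/4)H_2) · exp(−(i/4)H_1) equals the 2×2 identity matrix. (Equivalently, the Floquet propagator of the Rudner model at resonance J = 2π satisfies U(k_1,k_2,1) = 1 for all quasi-momenta.) -/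

import Mathlib

/-- The Pauli matrix `σ₁`. -/
noncomputable def pauli1 : Matrix (Fin 2) (Fin 2) ℂ := !![0, 1; 1, 0]

/-- The Pauli matrix `σ₂`. -/
noncomputable def pauli2 : Matrix (Fin 2) (Fin 2) ℂ := !![0, -Complex.I; Complex.I, 0]

/-- `H₁ = −2π σ₁`. -/
noncomputable def rudnerH1 (_k1 _k2 : ℝ) : Matrix (Fin 2) (Fin 2) ℂ :=
  (-(2 * (Real.pi : ℂ))) • pauli1

/-- `H₂ = −2π (cos(k₁−k₂) σ₁ + sin(k₁−k₂) σ₂)`. -/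
noncomputable def rudnerH2 (k1 k2 : ℝ) : Matrix (Fin 2) (Fin 2) ℂ :=
  (-(2 * (Real.pi : ℂ))) •
    (((Real.cos (k1 - k2) : ℂ)) • pauli1 + ((Real.sin (k1 - k2) : ℂ)) • pauli2)

/-- `H₃ = −2π (cos(k₁) σ₁ + sin(k₁) σ₂)`. -/
noncomputable def rudnerH3 (k1 _k2 : ℝ) : Matrix (Fin 2) (Fin 2) ℂ :=
  (-(2 * (Real.pi : ℂ))) •
    (((Real.cos k1 : ℂ)) • pauli1 + ((Real.sin k1 : ℂ)) • pauli2)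

/-- `H₄ = −2π (cos(k₂) σ₁ + sin(k₂) σ₂)`. -/
noncomputable def rudnerH4 (_k1 k2 : ℝ) : Matrix (Fin 2) (Fin 2) ℂ :=
  (-(2 * (Real.pi : ℂ))) •
    (((Real.cos k2 : ℂ)) • pauli1 + ((Real.sin k2 : ℂ)) • pauli2)

/-- The off-diagonal matrix `cos θ σ₁ + sin θ σ₂` written with complex exponentials. -/
noncomputable def Amat (θ : ℝ) : Matrix (Fin 2) (Fin 2) ℂ :=
  !![0, Complex.exp (-(θ : ℂ) * Complex.I); Complex.exp ((θ : ℂ) * Complex.I), 0]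

lemma exp_theta_I (θ : ℝ) :
    Complex.exp ((θ : ℂ) * Complex.I) = (Real.cos θ : ℂ) + (Real.sin θ : ℂ) * Complex.I := by
  rw [Complex.exp_mul_I, ← Complex.ofReal_cos, ← Complex.ofReal_sin]

lemma exp_neg_theta_I (θ : ℝ) :
    Complex.exp (-(θ : ℂ) * Complex.I) = (Real.cos θ : ℂ) - (Real.sin θ : ℂ) * Complex.I := by
  rw [show -(θ : ℂ) * Complex.I = ((-θ : ℝ) : ℂ) * Complex.I by push_cast; ring,
    Complex.exp_mul_I, ← Complex.ofReal_cos, ← Complex.ofReal_sin, Real.cos_neg, Real.sin_neg]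
  push_cast
  ring

lemma Amat_eq (θ : ℝ) :
    ((Real.cos θ : ℂ)) • pauli1 + ((Real.sin θ : ℂ)) • pauli2 = Amat θ := by
  ext i j
  fin_cases i <;> fin_cases j <;>
    simp [Amat, pauli1, pauli2]
  · rw [show -((θ : ℂ) * Complex.I) = (-(θ : ℂ)) * Complex.I by ring, Complex.exp_mul_I,
      Complex.cos_neg, Complex.sin_neg]
    ring
  · rw [Complex.exp_mul_I]

lemma Amat_apply (θ : ℝ) : Amat θ =
    !![0, (Complex.exp ((θ : ℂ) * Complex.I))⁻¹; Complex.exp ((θ : ℂ) * Complex.I), 0] := by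
  rw [Amat, ← Complex.exp_neg]
  ring_nf

lemma diag_two (a b : ℂ) : Matrix.diagonal ![a, b] = !![a, 0; 0, b] := by
  ext i j
  fin_cases i <;> fin_cases j <;> simp [Matrix.diagonal]

lemma conj_offdiag (e c : ℂ) (hne : e ≠ 0) :
    c • !![(0 : ℂ), e⁻¹; e, 0] =
      !![(1:ℂ), 1; e, -e] * !![c, 0; 0, -c] * !![(1:ℂ)/2, e⁻¹/2; 1/2, -(e⁻¹/2)] := by
  ext i j
  fin_cases i <;> fin_cases j <;>
    simp [Matrix.mul_fin_two] <;> field_simp <;> ring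

lemma exp_offdiag (e : ℂ) (hne : e ≠ 0) :
    NormedSpace.exp (((Real.pi : ℂ) / 2 * Complex.I) • !![0, e⁻¹; e, 0]) =
      Complex.I • !![(0 : ℂ), e⁻¹; e, 0] := by
  have hWW : !![(1:ℂ), 1; e, -e] * !![(1:ℂ)/2, e⁻¹/2; 1/2, -(e⁻¹/2)] = 1 := by
    ext i j
    fin_cases i <;> fin_cases j <;>
      simp [Matrix.mul_fin_two, Matrix.one_apply] <;> field_simp <;> ring
  have hWW' : !![(1:ℂ)/2, e⁻¹/2; 1/2, -(e⁻¹/2)] * !![(1:ℂ), 1; e, -e] = 1 := by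
    ext i j
    fin_cases i <;> fin_cases j <;>
      simp [Matrix.mul_fin_two, Matrix.one_apply] <;> field_simp <;> ring
  have hU : IsUnit (!![(1:ℂ), 1; e, -e]) := ⟨⟨_, _, hWW, hWW'⟩, rfl⟩
  have hWi : (!![(1:ℂ), 1; e, -e])⁻¹ = !![(1:ℂ)/2, e⁻¹/2; 1/2, -(e⁻¹/2)] :=
    Matrix.inv_eq_right_inv hWW
  have hdiag : NormedSpace.exp
      ![(Real.pi : ℂ) / 2 * Complex.I, -((Real.pi : ℂ) / 2 * Complex.I)] =
      ![Complex.I, -Complex.I] := by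
    rw [Pi.exp_def]
    funext i
    fin_cases i <;>
      simp [← Complex.exp_eq_exp_ℂ]
    · rw [show -((Real.pi : ℂ) / 2 * Complex.I) = ((-(Real.pi / 2) : ℝ) : ℂ) * Complex.I by
        push_cast; ring, Complex.exp_mul_I]
      simp
  rw [conj_offdiag e _ hne, ← diag_two, ← hWi, Matrix.exp_conj _ _ hU, Matrix.exp_diagonal,
    hdiag, hWi, diag_two, ← conj_offdiag e _ hne]

lemma exp_Amat (θ : ℝ) :
    NormedSpace.exp (((Real.pi : ℂ) / 2 * Complex.I) • Amat θ) = Complex.I • Amat θ := by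
  rw [Amat_apply]
  exact exp_offdiag _ (Complex.exp_ne_zero _)

lemma exp_rudner (θ : ℝ) :
    NormedSpace.exp ((-(Complex.I / 4)) • ((-(2 * (Real.pi : ℂ))) •
      (((Real.cos θ : ℂ)) • pauli1 + ((Real.sin θ : ℂ)) • pauli2))) = Complex.I • Amat θ := by
  rw [Amat_eq, smul_smul, show (-(Complex.I / 4)) * (-(2 * (Real.pi : ℂ))) =
    (Real.pi : ℂ) / 2 * Complex.I by ring, exp_Amat]

lemma key_prod (a b c : ℂ) (h : a + b + c = 0) :
    Complex.I * Complex.exp a * (Complex.I * Complex.exp b) *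
      (Complex.I * Complex.exp c) * Complex.I = 1 := by
  have hE : Complex.exp a * Complex.exp b * Complex.exp c = 1 := by
    rw [← Complex.exp_add, ← Complex.exp_add, h, Complex.exp_zero]
  have hI : Complex.I * Complex.I * Complex.I * Complex.I = 1 := by
    simp [Complex.I_mul_I]
  linear_combination (Complex.exp a * Complex.exp b * Complex.exp c) * hI + hE

/-- The Floquet propagator of the Rudner model at resonance `J = 2π`
returns to the identity after one period:
`exp(−(i/4)H₄) · exp(−(i/4)H₃) · exp(−(i/4)H₂) · exp(−(i/4)H₁) = 1` for all `k₁, k₂ ∈ ℝ`. -/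
theorem rudner_propagator_period_one (k1 k2 : ℝ) :
    NormedSpace.exp ((-(Complex.I / 4)) • rudnerH4 k1 k2) *
      NormedSpace.exp ((-(Complex.I / 4)) • rudnerH3 k1 k2) *
      NormedSpace.exp ((-(Complex.I / 4)) • rudnerH2 k1 k2) *
      NormedSpace.exp ((-(Complex.I / 4)) • rudnerH1 k1 k2) =
    (1 : Matrix (Fin 2) (Fin 2) ℂ) := by
  have h1 : NormedSpace.exp ((-(Complex.I / 4)) • rudnerH1 k1 k2) = Complex.I • Amat 0 := by
    rw [show rudnerH1 k1 k2 = (-(2 * (Real.pi : ℂ))) •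
      (((Real.cos (0:ℝ) : ℂ)) • pauli1 + ((Real.sin (0:ℝ) : ℂ)) • pauli2) by
        simp [rudnerH1]]
    exact exp_rudner 0
  have h2 : NormedSpace.exp ((-(Complex.I / 4)) • rudnerH2 k1 k2) =
      Complex.I • Amat (k1 - k2) := exp_rudner (k1 - k2)
  have h3 : NormedSpace.exp ((-(Complex.I / 4)) • rudnerH3 k1 k2) =
      Complex.I • Amat k1 := exp_rudner k1
  have h4 : NormedSpace.exp ((-(Complex.I / 4)) • rudnerH4 k1 k2) =
      Complex.I • Amat k2 := exp_rudner k2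
  rw [h1, h2, h3, h4]
  ext i j
  fin_cases i <;> fin_cases j <;>
    simp [Amat, Matrix.mul_fin_two, Matrix.one_apply]
  · exact key_prod _ _ _ (by ring)
  · exact key_prod _ _ _ (by ring)
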